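/- arXiv:2103.03951 — 2 statements merged into one kernel-verified Lean document; each statement's English description precedes it below -/
import Mathlib

section
/- Let k be a field of characteristic p > 0, let m', n' be positive integers with gcd(p,m') = 1, and let \alpha' \in k^*. If q_1 and q_2 are two coprime irreducible factors of \alpha' s^{m'} t^{n'} - 1 in k[s,t], then q_1 and q_2 have no common zero in k^2 at which the second coordinate is nonzero. -/
open MvPolynomial

/-- in characteristic `p > 0` with `gcd(p, m') = 1`, `m', n' > 0`,
two non-associate irreducible factors of `α' s^{m'} t^{n'} - 1` have no common zero
`(s₁, t₁)` with `t₁ ≠ 0`. -/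
theorem coprime_factors_no_common_zero {k : Type*} [Field k] (p : ℕ) [Fact p.Prime]
    [CharP k p] (m' n' : ℕ) (hm' : 0 < m') (hn' : 0 < n') (hgcd : Nat.gcd p m' = 1)
    (α' : k) (hα' : α' ≠ 0)
    (q₁ q₂ : MvPolynomial (Fin 2) k)
    (hq₁ : Irreducible q₁) (hq₂ : Irreducible q₂)
    (hd₁ : q₁ ∣ (C α' * X 0 ^ m' * X 1 ^ n' - 1 : MvPolynomial (Fin 2) k))
    (hd₂ : q₂ ∣ (C α' * X 0 ^ m' * X 1 ^ n' - 1 : MvPolynomial (Fin 2) k))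
    (hne : ¬ Associated q₁ q₂) :
    ∀ s₁ t₁ : k, t₁ ≠ 0 → ¬ (eval ![s₁, t₁] q₁ = 0 ∧ eval ![s₁, t₁] q₂ = 0) := by
  rintro s₁ t₁ ht₁ ⟨h1, h2⟩
  set f : MvPolynomial (Fin 2) k := C α' * X 0 ^ m' * X 1 ^ n' - 1 with hf
  have hq₂p := hq₂.prime
  -- q₁ * q₂ ∣ f
  obtain ⟨c, hc⟩ := hd₁
  have hq2c : q₂ ∣ c := by
    rcases hq₂p.dvd_or_dvd (hc ▸ hd₂) with h | h
    · exact absurd ((hq₂.associated_of_dvd hq₁ h).symm) hne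
    · exact h
  obtain ⟨d, hd⟩ := hq2c
  have hdvd : q₁ * q₂ ∣ f := ⟨d, by rw [hc, hd, mul_assoc]⟩
  -- specialization homomorphism
  set φ : MvPolynomial (Fin 2) k →+* Polynomial k :=
    (eval₂Hom Polynomial.C ![Polynomial.X, Polynomial.C t₁] :
      MvPolynomial (Fin 2) k →+* Polynomial k) with hφ
  have hevalφ : ∀ q : MvPolynomial (Fin 2) k,
      Polynomial.eval s₁ (φ q) = eval ![s₁, t₁] q := by
    intro q
    induction q using MvPolynomial.induction_on with
    | C a => simp [hφ]
    | add r q hr hq => simp [map_add, hr, hq]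
    | mul_X r i hr =>
        simp only [hφ, coe_eval₂Hom] at hr ⊢
        rw [eval₂_mul, eval₂_X, Polynomial.eval_mul, hr, map_mul, eval_X]
        congr 1
        fin_cases i <;> simp
  -- s₁ is a root of φ q₁ and φ q₂
  have hr1 : (Polynomial.X - Polynomial.C s₁) ∣ φ q₁ :=
    Polynomial.dvd_iff_isRoot.2 (by rw [Polynomial.IsRoot, hevalφ]; exact h1)
  have hr2 : (Polynomial.X - Polynomial.C s₁) ∣ φ q₂ :=
    Polynomial.dvd_iff_isRoot.2 (by rw [Polynomial.IsRoot, hevalφ]; exact h2)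
  have hsq : (Polynomial.X - Polynomial.C s₁) ^ 2 ∣ φ f := by
    rw [sq]
    exact dvd_trans (mul_dvd_mul hr1 hr2) (by rw [← map_mul]; exact map_dvd φ hdvd)
  -- compute φ f
  have hφf : φ f = Polynomial.C (α' * t₁ ^ n') * Polynomial.X ^ m' - 1 := by
    simp only [hf, hφ, map_sub, map_mul, map_pow, map_one, eval₂Hom_X', coe_eval₂Hom,
      eval₂_C]
    simp only [Matrix.cons_val_zero, Matrix.cons_val_one, Matrix.head_cons]
    rw [← Polynomial.C_pow]
    ring
  -- s₁ ≠ 0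
  have hfval : eval ![s₁, t₁] f = 0 := by rw [hc]; simp [h1]
  have hs₁ : α' * t₁ ^ n' * s₁ ^ m' = 1 := by
    have := hevalφ f
    rw [hφf] at this
    simp only [Polynomial.eval_sub, Polynomial.eval_mul, Polynomial.eval_C,
      Polynomial.eval_pow, Polynomial.eval_X, Polynomial.eval_one] at this
    rw [hfval] at this
    linear_combination this
  have hs₁ne : s₁ ≠ 0 := by
    intro h
    rw [h, zero_pow hm'.ne', mul_zero] at hs₁
    exact zero_ne_one hs₁
  -- derivative vanishes at s₁
  have hder : (Polynomial.derivative (φ f)).eval s₁ = 0 := by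
    obtain ⟨h, hh⟩ := hsq
    rw [hh]
    simp [Polynomial.derivative_mul, Polynomial.derivative_pow]
  rw [hφf] at hder
  simp only [Polynomial.derivative_sub, Polynomial.derivative_one, sub_zero,
    Polynomial.derivative_C_mul, Polynomial.derivative_X_pow, Polynomial.eval_mul,
    Polynomial.eval_C, Polynomial.eval_pow, Polynomial.eval_X, Polynomial.eval_natCast,
    Polynomial.eval_smul] at hder
  -- m' ≠ 0 in k
  have hm'k : (m' : k) ≠ 0 := by
    rw [Ne, CharP.cast_eq_zero_iff k p]
    intro hdvd'
    have := (Fact.out : p.Prime).coprime_iff_not_dvd.1 hgcd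
    exact this hdvd'
  exact mul_ne_zero (mul_ne_zero hα' (pow_ne_zero _ ht₁))
    (mul_ne_zero hm'k (pow_ne_zero _ hs₁ne)) hder
end

section
/- Let F be a field and n = 2k+1 \geq 3 odd. Consider the affine variety W \subset F^{n+2} \times F^* of tuples (a, b, c_1, \ldots, c_n, t) satisfying: t^{-1} + c_n(1 + ab) = 0; 1 + (1+ab)(-c_1) = 0 (interpreting products as commutative, with the extra term (-b)(1 + c_2 c_3) added to this equation when n = 3); 1 + c_{j-1} c_j = 0 for 2 \leq j \leq k+1; and 1 + c_j c_{j-1} = 0 for k+2 \leq j \leq n. Then the projection (a,b,c_1,\ldots,c_n,t) \mapsto (a, b, c_1) is a bijection from W onto V' = \{(a,b,c) \in F^3 : (ab+1)c = 1\}, with inverse given by c_j = c for j odd, c_j = -(ab+1) for j even, and t = -1. -/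
/-- The (abelianized) augmentation variety `W` of the Legendrian twist knot `Λₙ`,
`n = 2K+1 ≥ 3`: tuples `(a, b, c₁, …, cₙ, t)` (here `c i` stands for `c_{i+1}`)
satisfying the abelianized differentials of the degree-1 Reeb chords set to zero. -/
def twistW (F : Type*) [Field F] (K n : ℕ) (hn : n = 2 * K + 1) (h3 : 3 ≤ n) :
    Set (F × F × (Fin n → F) × Fˣ) :=
  {w | -- ∂e₀ = 0 :  t⁻¹ + cₙ (1 + a b) = 0
       (((w.2.2.2⁻¹ : Fˣ) : F) + w.2.2.1 ⟨n - 1, by omega⟩ * (1 + w.1 * w.2.1) = 0) ∧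
       -- ∂e₁ = 0 :  1 + (1 + a b)(-c₁) (+ (-b)(1 + c₂ c₃) when n = 3) = 0
       (1 + (1 + w.1 * w.2.1) * (-(w.2.2.1 ⟨0, by omega⟩)) +
          (if n = 3 then
            (-(w.2.1)) * (1 + w.2.2.1 ⟨1, by omega⟩ * w.2.2.1 ⟨2, by omega⟩)
           else 0) = 0) ∧
       -- ∂e_j = 0 for 2 ≤ j ≤ K+1 :  1 + c_{j-1} c_j = 0
       (∀ (j : ℕ) (_hj0 : 2 ≤ j) (_hj1 : j ≤ K + 1) (_hj2 : j ≤ n), 1 + w.2.2.1 ⟨j - 2, by omega⟩ * w.2.2.1 ⟨j - 1, by omega⟩ = 0) ∧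
       -- ∂e_j = 0 for K+2 ≤ j ≤ n :  1 + c_j c_{j-1} = 0
       (∀ (j : ℕ) (_hj1 : K + 2 ≤ j) (_hj2 : j ≤ n),
          1 + w.2.2.1 ⟨j - 1, by omega⟩ * w.2.2.1 ⟨j - 2, by omega⟩ = 0)}

/-- The hypersurface `V' = {(a,b,c) : (ab+1)c = 1}`. -/
def twistV' (F : Type*) [Field F] : Set (F × F × F) :=
  {v | (v.1 * v.2.1 + 1) * v.2.2 = 1}

/-- The projection `(a, b, c₁, …, cₙ, t) ↦ (a, b, c₁)`. -/
def twistProj (F : Type*) [Field F] (K n : ℕ) (hn : n = 2 * K + 1) (h3 : 3 ≤ n) :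
    F × F × (Fin n → F) × Fˣ → F × F × F :=
  fun w => (w.1, w.2.1, w.2.2.1 ⟨0, by omega⟩)

/-- The inverse map: `c_j = c` for `j` odd (i.e. `c i = c` for `i` even, where
`c i` stands for `c_{i+1}`), `c_j = -(ab+1)` for `j` even, and `t = -1`. -/
def twistInv (F : Type*) [Field F] (K n : ℕ) (hn : n = 2 * K + 1) (h3 : 3 ≤ n) :
    F × F × F → F × F × (Fin n → F) × Fˣ :=
  fun v => (v.1, v.2.1,
    fun i => if (i : ℕ) % 2 = 0 then v.2.2 else -(v.1 * v.2.1 + 1),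
    (-1 : Fˣ))

lemma twistInv_mem {F : Type*} [Field F] (K n : ℕ) (hn : n = 2 * K + 1) (h3 : 3 ≤ n)
    {v : F × F × F} (hv : v ∈ twistV' F) :
    twistInv F K n hn h3 v ∈ twistW F K n hn h3 := by
  obtain ⟨a, b, cc⟩ := v
  simp only [twistV', Set.mem_setOf_eq] at hv
  simp only [twistW, twistInv, Set.mem_setOf_eq]
  refine ⟨?_, ?_, ?_, ?_⟩
  · rw [if_pos (show (n-1) % 2 = 0 by omega)]
    simp only [inv_neg, inv_one, Units.val_neg, Units.val_one]
    linear_combination hv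
  · norm_num
    by_cases h : n = 3
    · rw [if_pos h]; linear_combination (b - 1) * hv
    · rw [if_neg h]; linear_combination -hv
  · intro j hj0 hj1 hj2
    rcases Nat.mod_two_eq_zero_or_one (j - 2) with h | h
    · rw [if_pos h, if_neg (show ¬ ((j-1) % 2 = 0) by omega)]
      linear_combination -hv
    · rw [if_neg (by omega), if_pos (show (j-1) % 2 = 0 by omega)]
      linear_combination -hv
  · intro j hj1 hj2
    rcases Nat.mod_two_eq_zero_or_one (j - 1) with h | h
    · rw [if_pos h, if_neg (show ¬ ((j-2) % 2 = 0) by omega)]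
      linear_combination -hv
    · rw [if_neg (by omega), if_pos (show (j-2) % 2 = 0 by omega)]
      linear_combination -hv

lemma twistW_struct {F : Type*} [Field F] (K n : ℕ) (hn : n = 2 * K + 1) (h3 : 3 ≤ n)
    {w : F × F × (Fin n → F) × Fˣ} (hw : w ∈ twistW F K n hn h3) :
    twistProj F K n hn h3 w ∈ twistV' F ∧
      twistInv F K n hn h3 (twistProj F K n hn h3 w) = w := by
  obtain ⟨a, b, c, t⟩ := w
  simp only [twistW, Set.mem_setOf_eq] at hw
  obtain ⟨h0, h1, h2, h4⟩ := hw
  -- canonical nat-indexed version of c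
  set C : ℕ → F := fun m => if h : m < n then c ⟨m, h⟩ else 0 with hCdef
  have hC : ∀ (m : ℕ) (h : m < n), c ⟨m, h⟩ = C m := by
    intro m h; simp only [hCdef]; rw [dif_pos h]
  -- adjacency
  have hadj : ∀ m : ℕ, m + 1 < n → 1 + C m * C (m + 1) = 0 := by
    intro m hm
    rcases le_or_gt (m + 2) (K + 1) with hle | hlt
    · have := h2 (m + 2) (by omega) hle (by omega)
      rw [hC _ (by omega), hC _ (by omega)] at this
      simpa using this
    · have := h4 (m + 2) (by omega) (by omega)
      rw [hC _ (by omega), hC _ (by omega)] at this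
      have h' : 1 + C (m + 2 - 2) * C (m + 2 - 1) = 0 := by linear_combination this
      simpa using h'
  -- c1 relation
  have hc0 : (1 + a * b) * C 0 = 1 := by
    rw [hC 0 (by omega)] at h1
    by_cases h' : n = 3
    · rw [if_pos h'] at h1
      rw [hC 1 (by omega), hC 2 (by omega)] at h1
      have := hadj 1 (by omega)
      linear_combination -h1 - b * this
    · rw [if_neg h'] at h1
      linear_combination -h1
  have hC0ne : C 0 ≠ 0 := by
    intro h; rw [h, mul_zero] at hc0; exact one_ne_zero hc0.symm
  have habne : (1 + a * b) ≠ 0 := by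
    intro h; rw [h, zero_mul] at hc0; exact one_ne_zero hc0.symm
  -- alternation
  have hall : ∀ m : ℕ, m < n → C m = if m % 2 = 0 then C 0 else -(a * b + 1) := by
    intro m
    induction m with
    | zero => intro _; simp
    | succ p ih =>
      intro hp
      have hpn : p < n := by omega
      have hadjp := hadj p hp
      have hCp := ih hpn
      rcases Nat.mod_two_eq_zero_or_one p with h | h
      · rw [if_pos h] at hCp
        rw [if_neg (show ¬ ((p+1) % 2 = 0) by omega)]
        exact mul_left_cancel₀ hC0ne
          (show C 0 * C (p + 1) = C 0 * -(a * b + 1) by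
            linear_combination hadjp + hc0 - C (p + 1) * hCp)
      · rw [if_neg (by omega)] at hCp
        rw [if_pos (show (p+1) % 2 = 0 by omega)]
        have := mul_left_cancel₀ habne
          (show (1 + a * b) * C (p + 1) = (1 + a * b) * C 0 by
            rw [hCp] at hadjp; linear_combination -hadjp - hc0)
        exact this
  -- t = -1
  have ht : t = -1 := by
    rw [hC _ (by omega)] at h0
    rw [hall (n - 1) (by omega), if_pos (by omega)] at h0
    have htv : ((t⁻¹ : Fˣ) : F) = ((-1 : Fˣ) : F) := by
      simp only [Units.val_neg, Units.val_one]
      linear_combination h0 - hc0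
    have : t⁻¹ = (-1 : Fˣ) := Units.ext htv
    rw [← inv_inv t, this]
    simp
  constructor
  · show (a * b + 1) * c ⟨0, by omega⟩ = 1
    rw [hC 0 (by omega)]
    linear_combination hc0
  · refine Prod.ext rfl (Prod.ext rfl (Prod.ext ?_ ?_))
    · funext i
      show (if (i : ℕ) % 2 = 0 then c ⟨0, by omega⟩ else -(a * b + 1)) = c i
      rw [hC 0 (by omega), show c i = C i.1 from hC i.1 i.2, hall i.1 i.2]
    · exact ht.symm


/-- the projection `(a,b,c₁,…,cₙ,t) ↦ (a,b,c₁)` is a bijection from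
the augmentation variety `W` of `Λₙ` onto `V' = {(a,b,c) : (ab+1)c = 1}`, with
inverse given by `c_j = c` for `j` odd, `c_j = -(ab+1)` for `j` even, and `t = -1`. -/
theorem twist_knot_augmentation_variety {F : Type*} [Field F] (K n : ℕ)
    (hn : n = 2 * K + 1) (h3 : 3 ≤ n) :
    Set.BijOn (twistProj F K n hn h3) (twistW F K n hn h3) (twistV' F) ∧
    (∀ v ∈ twistV' F, twistInv F K n hn h3 v ∈ twistW F K n hn h3 ∧
        twistProj F K n hn h3 (twistInv F K n hn h3 v) = v) ∧
    (∀ w ∈ twistW F K n hn h3, twistInv F K n hn h3 (twistProj F K n hn h3 w) = w) := by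
  have hinv : ∀ v ∈ twistV' F, twistInv F K n hn h3 v ∈ twistW F K n hn h3 ∧
      twistProj F K n hn h3 (twistInv F K n hn h3 v) = v := by
    intro v hv
    refine ⟨twistInv_mem K n hn h3 hv, ?_⟩
    obtain ⟨a, b, c⟩ := v
    rfl
  have hli : ∀ w ∈ twistW F K n hn h3,
      twistInv F K n hn h3 (twistProj F K n hn h3 w) = w :=
    fun w hw => (twistW_struct K n hn h3 hw).2
  refine ⟨⟨fun w hw => (twistW_struct K n hn h3 hw).1, ?_, ?_⟩, hinv, hli⟩
  · intro x hx y hy hxy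
    rw [← hli x hx, ← hli y hy, hxy]
  · intro v hv
    exact ⟨twistInv F K n hn h3 v, (hinv v hv).1, (hinv v hv).2⟩
end
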